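/- The sequence of large Schröder numbers is log-balanced: for all n ≥ 1, r_n^2 ≤ r_{n-1} r_{n+1} ≤ (1 + 1/n) r_n^2. -/

import Mathlib

noncomputable def sA (k : ℕ) : ℝ :=
  Real.sqrt (32*(k:ℝ)^4+28*(k:ℝ)^3+13*(k:ℝ)^2+8*(k:ℝ))

noncomputable def sB (k : ℕ) : ℝ :=
  Real.sqrt (32*(k:ℝ)^2+32*(k:ℝ)+17)

noncomputable def fa (k : ℕ) : ℝ :=
  ((6*(k:ℝ)^2+3*(k:ℝ)) + sA k) / (2*((k:ℝ)+1)*((k:ℝ)+2))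

noncomputable def fb (k : ℕ) : ℝ :=
  ((6*(k:ℝ)+3) + sB k) / (2*(k:ℝ)+4)

lemma sA_nonneg (k : ℕ) : 0 ≤ sA k := Real.sqrt_nonneg _

lemma sB_nonneg (k : ℕ) : 0 ≤ sB k := Real.sqrt_nonneg _

lemma sA_sq (k : ℕ) : (sA k)^2 = 32*(k:ℝ)^4+28*(k:ℝ)^3+13*(k:ℝ)^2+8*(k:ℝ) :=
  Real.sq_sqrt (by positivity)

lemma sB_sq (k : ℕ) : (sB k)^2 = 32*(k:ℝ)^2+32*(k:ℝ)+17 :=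
  Real.sq_sqrt (by positivity)

lemma fa_ge_one (k : ℕ) (hk : 1 ≤ k) : 1 ≤ fa k := by
  have hK : (1:ℝ) ≤ (k:ℝ) := by exact_mod_cast hk
  have h3 : 3*(k:ℝ) ≤ sA k := by
    apply le_of_pow_le_pow_left₀ two_ne_zero (sA_nonneg k)
    rw [sA_sq]; nlinarith
  rw [fa, le_div_iff₀ (by positivity)]
  nlinarith [h3]

lemma fb_ge_one (k : ℕ) (hk : 1 ≤ k) : 1 ≤ fb k := by
  have hK : (1:ℝ) ≤ (k:ℝ) := by exact_mod_cast hk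
  rw [fb, le_div_iff₀ (by positivity)]
  nlinarith [sB_nonneg k]

lemma fa_pos (k : ℕ) (hk : 1 ≤ k) : 0 < fa k := lt_of_lt_of_le one_pos (fa_ge_one k hk)

lemma fb_pos (k : ℕ) (hk : 1 ≤ k) : 0 < fb k := lt_of_lt_of_le one_pos (fb_ge_one k hk)

lemma root_a (k : ℕ) :
    ((k:ℝ)+1)*((k:ℝ)+2)*(fa k)^2 - (k:ℝ)*(6*(k:ℝ)+3)*(fa k) + (k:ℝ)*((k:ℝ)-1) = 0 := by
  have hs := sA_sq k
  rw [fa]; field_simp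
  linear_combination hs

lemma root_b (k : ℕ) :
    ((k:ℝ)+2)*(fb k)^2 - (6*(k:ℝ)+3)*(fb k) + ((k:ℝ)-1) = 0 := by
  have hs := sB_sq k
  rw [fb]; field_simp
  linear_combination ((k:ℝ)+2) * hs

lemma b_mono (k : ℕ) : fb k ≤ fb (k+1) := by
  have h1 := sB_nonneg k
  have h2 := sB_nonneg (k+1)
  have e1 := sB_sq k
  have e2 := sB_sq (k+1)
  push_cast at e2
  have key : (2*(k:ℝ)+6)*(sB k) ≤ 18 + (2*(k:ℝ)+4)*(sB (k+1)) := by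
    nlinarith [sq_nonneg ((2*(k:ℝ)+4)*(sB (k+1)) + 18 - (2*(k:ℝ)+6)*(sB k)),
      sq_nonneg ((2*(k:ℝ)+4)*(sB (k+1)) - (2*(k:ℝ)+6)*(sB k)),
      mul_nonneg h1 h2, sq_nonneg (sB k - sB (k+1)), sq_nonneg (sB k + sB (k+1)),
      mul_nonneg (mul_nonneg h1 h2) (Nat.cast_nonneg (α := ℝ) k)]
  rw [fb, fb, div_le_div_iff₀ (by positivity) (by positivity)]
  push_cast
  nlinarith [key]

lemma a_step (k : ℕ) : (k:ℝ) * fa (k+1) ≤ ((k:ℝ)+1) * fa k := by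
  have h1 := sA_nonneg k
  have h2 := sA_nonneg (k+1)
  have e1 := sA_sq k
  have e2 := sA_sq (k+1)
  push_cast at e2
  have hK0 : (0:ℝ) ≤ (k:ℝ) := Nat.cast_nonneg k
  have key : (k:ℝ)*(sA (k+1)) ≤ 6*(k:ℝ)^2 + ((k:ℝ)+3)*(sA k) := by
    have keysq : ((k:ℝ)*(sA (k+1)))^2 ≤ (6*(k:ℝ)^2 + ((k:ℝ)+3)*(sA k))^2 := by
      nlinarith [mul_nonneg (mul_nonneg h1 hK0) hK0, mul_nonneg h1 hK0,
        mul_nonneg (mul_nonneg (mul_nonneg h1 hK0) hK0) hK0]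
    exact le_of_pow_le_pow_left₀ two_ne_zero (by positivity) keysq
  rw [fa, fa, ← mul_div_assoc, ← mul_div_assoc,
    div_le_div_iff₀ (by positivity) (by positivity)]
  push_cast
  nlinarith [key, mul_nonneg (mul_nonneg
    (by linarith : (0:ℝ) ≤ (k:ℝ)+1) (by linarith : (0:ℝ) ≤ (k:ℝ)+2))
    (by linarith [key] : (0:ℝ) ≤ 6*(k:ℝ)^2 + ((k:ℝ)+3)*(sA k) - (k:ℝ)*(sA (k+1)))]

lemma b5 (k : ℕ) : 5*(k:ℝ)+1 ≤ ((k:ℝ)+2) * fb k := by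
  have h1 := sB_nonneg k
  have e1 := sB_sq k
  have hs4 : 4*(k:ℝ)-1 ≤ sB k := by
    nlinarith [sq_nonneg (sB k), Nat.cast_nonneg (α := ℝ) k]
  rw [fb, ← mul_div_assoc, le_div_iff₀ (by positivity)]
  nlinarith [hs4, Nat.cast_nonneg (α := ℝ) k]

lemma vert_a (k : ℕ) : (k:ℝ)*(6*(k:ℝ)+3) ≤ 2*((k:ℝ)+1)*((k:ℝ)+2) * fa k := by
  have h1 := sA_nonneg k
  rw [fa, ← mul_div_assoc, le_div_iff₀ (by positivity)]
  nlinarith [Nat.cast_nonneg (α := ℝ) k]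

lemma sqrt81 : Real.sqrt 81 = 9 := by
  rw [show (81:ℝ) = 9^2 by norm_num]
  exact Real.sqrt_sq (by norm_num)

lemma fa_one : fa 1 = 3/2 := by
  rw [fa, sA]; norm_num [sqrt81]

lemma fb_one : fb 1 = 3 := by
  rw [fb, sB]; norm_num [sqrt81]

set_option maxHeartbeats 1000000 in
theorem schroeder_log_balanced (r : ℕ → ℝ)
    (h0 : r 0 = 1) (h1 : r 1 = 2)
    (hrec : ∀ n : ℕ, n ≥ 2 → ((n : ℝ) + 1) * r n =
      3 * (2 * (n : ℝ) - 1) * r (n - 1) - ((n : ℝ) - 2) * r (n - 2)) :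
    ∀ n ≥ 1, (r n) ^ 2 ≤ r (n - 1) * r (n + 1) ∧
      r (n - 1) * r (n + 1) ≤ (1 + 1 / (n : ℝ)) * (r n) ^ 2 := by
  -- the `hz` normal form of the recurrence
  have hz : ∀ m : ℕ, ((m:ℝ)+3) * r (m+2) = (6*(m:ℝ)+9) * r (m+1) - (m:ℝ) * r m := by
    intro m
    have hr := hrec (m+2) (by omega)
    have e1 : m+2-1 = m+1 := rfl
    have e2 : m+2-2 = m := rfl
    rw [e1, e2] at hr
    push_cast at hr
    linear_combination hr
  -- the main induction: ratio bounds
  have main : ∀ m : ℕ, 0 < r m ∧ 0 < r (m+1) ∧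
      fa (m+1) * r m ≤ r (m+1) ∧ r (m+1) ≤ fb (m+1) * r m := by
    intro m
    induction m with
    | zero =>
      refine ⟨by rw [h0]; norm_num, by rw [h1]; norm_num, ?_, ?_⟩
      · rw [h0, h1, fa_one]; norm_num
      · rw [h0, h1, fb_one]; norm_num
    | succ m ih =>
      obtain ⟨hx, hy, hay, hby⟩ := ih
      have hm0 : (0:ℝ) ≤ (m:ℝ) := Nat.cast_nonneg m
      have hfa1 : 1 ≤ fa (m+1) := fa_ge_one (m+1) (by omega)
      have hfa2 : 1 ≤ fa (m+2) := fa_ge_one (m+2) (by omega)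
      have hfb1 : 1 ≤ fb (m+1) := fb_ge_one (m+1) (by omega)
      have hfa1p : 0 < fa (m+1) := by linarith
      have hfb1p : 0 < fb (m+1) := by linarith
      have hzz := hz m
      -- root equations at k = m+1
      have ra : ((m:ℝ)+2)*((m:ℝ)+3)*(fa (m+1))^2 - ((m:ℝ)+1)*(6*(m:ℝ)+9)*(fa (m+1))
          + ((m:ℝ)+1)*(m:ℝ) = 0 := by
        have := root_a (m+1); push_cast at this; linear_combination this
      have rb : ((m:ℝ)+3)*(fb (m+1))^2 - (6*(m:ℝ)+9)*(fb (m+1)) + (m:ℝ) = 0 := by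
        have := root_b (m+1); push_cast at this; linear_combination this
      have as' : ((m:ℝ)+1) * fa (m+2) ≤ ((m:ℝ)+2) * fa (m+1) := by
        have := a_step (m+1); push_cast at this; linarith
      have bm : fb (m+1) ≤ fb (m+2) := b_mono (m+1)
      -- lower bound : fa (m+2) * r (m+1) ≤ r (m+2)
      have low : fa (m+2) * r (m+1) ≤ r (m+2) := by
        have hz' : ((m:ℝ)+3)*(r (m+2))*(((m:ℝ)+1)*fa (m+1))
            = ((m:ℝ)+1)*(6*(m:ℝ)+9)*(fa (m+1))*(r (m+1))
              - ((m:ℝ)+1)*(m:ℝ)*(fa (m+1))*(r m) := by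
          linear_combination (((m:ℝ)+1)*fa (m+1)) * hzz
        have H1 : ((m:ℝ)+1)*(m:ℝ)*(fa (m+1) * r m) ≤ ((m:ℝ)+1)*(m:ℝ)*(r (m+1)) :=
          mul_le_mul_of_nonneg_left hay (by positivity)
        have key1y : ((m:ℝ)+1)*(6*(m:ℝ)+9)*(fa (m+1))*(r (m+1))
            - ((m:ℝ)+1)*(m:ℝ)*(r (m+1))
            = ((m:ℝ)+2)*((m:ℝ)+3)*(fa (m+1))^2*(r (m+1)) := by
          linear_combination (-(r (m+1))) * ra
        have H2 : (((m:ℝ)+1) * fa (m+2)) * (((m:ℝ)+3)*(fa (m+1))*(r (m+1)))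
            ≤ (((m:ℝ)+2) * fa (m+1)) * (((m:ℝ)+3)*(fa (m+1))*(r (m+1))) :=
          mul_le_mul_of_nonneg_right as' (by positivity)
        have low_scaled : (fa (m+2) * r (m+1)) * (((m:ℝ)+3)*(((m:ℝ)+1)*fa (m+1)))
            ≤ (r (m+2)) * (((m:ℝ)+3)*(((m:ℝ)+1)*fa (m+1))) := by
          linarith [hz', H1, key1y, H2]
        have hc : 0 < ((m:ℝ)+3)*(((m:ℝ)+1)*fa (m+1)) := by positivity
        exact le_of_mul_le_mul_right low_scaled hc
      -- upper bound : r (m+2) ≤ fb (m+2) * r (m+1)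
      have up : r (m+2) ≤ fb (m+2) * r (m+1) := by
        have hz'' : ((m:ℝ)+3)*(r (m+2))*(fb (m+1))
            = (6*(m:ℝ)+9)*(fb (m+1))*(r (m+1)) - (m:ℝ)*(fb (m+1))*(r m) := by
          linear_combination (fb (m+1)) * hzz
        have H3 : (m:ℝ)*(r (m+1)) ≤ (m:ℝ)*(fb (m+1) * r m) :=
          mul_le_mul_of_nonneg_left hby hm0
        have key2y : (6*(m:ℝ)+9)*(fb (m+1))*(r (m+1)) - (m:ℝ)*(r (m+1))
            = ((m:ℝ)+3)*(fb (m+1))^2*(r (m+1)) := by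
          linear_combination (-(r (m+1))) * rb
        have H4 : (fb (m+1)) * (((m:ℝ)+3)*(fb (m+1))*(r (m+1)))
            ≤ (fb (m+2)) * (((m:ℝ)+3)*(fb (m+1))*(r (m+1))) :=
          mul_le_mul_of_nonneg_right bm (by positivity)
        have up_scaled : (r (m+2)) * (((m:ℝ)+3)*(fb (m+1)))
            ≤ (fb (m+2) * r (m+1)) * (((m:ℝ)+3)*(fb (m+1))) := by
          linarith [hz'', H3, key2y, H4]
        have hc : 0 < ((m:ℝ)+3)*(fb (m+1)) := by positivity
        exact le_of_mul_le_mul_right up_scaled hc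
      have hz2 : 0 < r (m+2) := by nlinarith [low, hfa2, hy]
      exact ⟨hy, hz2, low, up⟩
  -- finish
  intro n hn
  obtain ⟨m, rfl⟩ : ∃ m, n = m + 1 := ⟨n-1, by omega⟩
  have e1 : m+1-1 = m := rfl
  rw [e1]
  obtain ⟨hx, hy, hay, hby⟩ := main m
  obtain ⟨_, hz2, hay2, hby2⟩ := main (m+1)
  have hzz := hz m
  have hm0 : (0:ℝ) ≤ (m:ℝ) := Nat.cast_nonneg m
  have hfa1 : 1 ≤ fa (m+1) := fa_ge_one (m+1) (by omega)
  have hfb1 : 1 ≤ fb (m+1) := fb_ge_one (m+1) (by omega)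
  have ra : ((m:ℝ)+2)*((m:ℝ)+3)*(fa (m+1))^2 - ((m:ℝ)+1)*(6*(m:ℝ)+9)*(fa (m+1))
      + ((m:ℝ)+1)*(m:ℝ) = 0 := by
    have := root_a (m+1); push_cast at this; linear_combination this
  have rb : ((m:ℝ)+3)*(fb (m+1))^2 - (6*(m:ℝ)+9)*(fb (m+1)) + (m:ℝ) = 0 := by
    have := root_b (m+1); push_cast at this; linear_combination this
  have b5' : 5*(m:ℝ)+6 ≤ ((m:ℝ)+3) * fb (m+1) := by
    have := b5 (m+1); push_cast at this; linarith
  have vert' : ((m:ℝ)+1)*(6*(m:ℝ)+9) ≤ 2*((m:ℝ)+2)*((m:ℝ)+3) * fa (m+1) := by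
    have := vert_a (m+1); push_cast at this; linarith
  have hxy : r m ≤ r (m+1) := by nlinarith [hay, hfa1, hx]
  constructor
  · -- r (m+1)^2 ≤ r m * r (m+2)
    have T1 : 0 ≤ (r (m+1) - r m) * (fb (m+1) * r m - r (m+1)) :=
      mul_nonneg (by linarith) (by linarith)
    have T2 : 0 ≤ ((fb (m+1) * r m - r (m+1)) * r m) * (((m:ℝ)+3)*fb (m+1) - (5*(m:ℝ)+6)) :=
      mul_nonneg (mul_nonneg (by linarith) hx.le) (by linarith)
    have rbx : (((m:ℝ)+3)*(fb (m+1))^2 - (6*(m:ℝ)+9)*(fb (m+1)) + (m:ℝ)) * (r m)^2 = 0 := by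
      rw [rb, zero_mul]
    have E : ((m:ℝ)+3) * (r (m+1))^2 - (6*(m:ℝ)+9) * (r m * r (m+1)) + (m:ℝ)*(r m)^2
        = -(((m:ℝ)+3) * ((r (m+1) - r m) * (fb (m+1) * r m - r (m+1))))
          - ((fb (m+1) * r m - r (m+1)) * r m) * (((m:ℝ)+3)*fb (m+1) - (5*(m:ℝ)+6))
          + (((m:ℝ)+3)*(fb (m+1))^2 - (6*(m:ℝ)+9)*(fb (m+1)) + (m:ℝ)) * (r m)^2 := by
      ring
    have G1 : ((m:ℝ)+3) * (r (m+1))^2 - (6*(m:ℝ)+9) * (r m * r (m+1)) + (m:ℝ)*(r m)^2 ≤ 0 := by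
      rw [E, rbx]
      nlinarith [T1, T2, hm0]
    have hzx : ((m:ℝ)+3) * (r m * r (m+2)) = (6*(m:ℝ)+9)*(r m * r (m+1)) - (m:ℝ)*(r m)^2 := by
      linear_combination (r m) * hzz
    have step : ((m:ℝ)+3) * (r (m+1))^2 ≤ ((m:ℝ)+3) * (r m * r (m+2)) := by linarith
    exact le_of_mul_le_mul_left step (by positivity)
  · -- r m * r (m+2) ≤ (1 + 1/(m+1)) * r (m+1)^2
    have hayc : ((m:ℝ)+2)*((m:ℝ)+3)*(fa (m+1) * r m) ≤ ((m:ℝ)+2)*((m:ℝ)+3)*(r (m+1)) :=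
      mul_le_mul_of_nonneg_left hay (by positivity)
    have vertx : ((m:ℝ)+1)*(6*(m:ℝ)+9) * r m ≤ 2*((m:ℝ)+2)*((m:ℝ)+3) * fa (m+1) * r m :=
      mul_le_mul_of_nonneg_right vert' hx.le
    have B2 : 0 ≤ ((m:ℝ)+2)*((m:ℝ)+3)*(r (m+1) + fa (m+1) * r m)
        - ((m:ℝ)+1)*(6*(m:ℝ)+9) * r m := by nlinarith [hayc, vertx]
    have rax : (((m:ℝ)+2)*((m:ℝ)+3)*(fa (m+1))^2 - ((m:ℝ)+1)*(6*(m:ℝ)+9)*(fa (m+1))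
        + ((m:ℝ)+1)*(m:ℝ)) * (r m)^2 = 0 := by rw [ra, zero_mul]
    have E2 : ((m:ℝ)+2)*((m:ℝ)+3)*(r (m+1))^2 - ((m:ℝ)+1)*(6*(m:ℝ)+9)*(r m * r (m+1))
        + ((m:ℝ)+1)*(m:ℝ)*(r m)^2
        = (r (m+1) - fa (m+1) * r m)
            * (((m:ℝ)+2)*((m:ℝ)+3)*(r (m+1) + fa (m+1) * r m) - ((m:ℝ)+1)*(6*(m:ℝ)+9) * r m)
          + (((m:ℝ)+2)*((m:ℝ)+3)*(fa (m+1))^2 - ((m:ℝ)+1)*(6*(m:ℝ)+9)*(fa (m+1))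
              + ((m:ℝ)+1)*(m:ℝ)) * (r m)^2 := by
      ring
    have G2 : 0 ≤ ((m:ℝ)+2)*((m:ℝ)+3)*(r (m+1))^2 - ((m:ℝ)+1)*(6*(m:ℝ)+9)*(r m * r (m+1))
        + ((m:ℝ)+1)*(m:ℝ)*(r m)^2 := by
      rw [E2, rax, add_zero]
      exact mul_nonneg (by linarith) B2
    have hzx1 : ((m:ℝ)+1)*(((m:ℝ)+3) * (r m * r (m+2)))
        = ((m:ℝ)+1)*(6*(m:ℝ)+9)*(r m * r (m+1)) - ((m:ℝ)+1)*(m:ℝ)*(r m)^2 := by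
      linear_combination (((m:ℝ)+1)*(r m)) * hzz
    have step2 : ((m:ℝ)+3) * (r m * r (m+2) * ((m:ℝ)+1))
        ≤ ((m:ℝ)+3) * (((m:ℝ)+2) * (r (m+1))^2) := by linarith [G2, hzx1]
    have step3 : r m * r (m+2) * ((m:ℝ)+1) ≤ ((m:ℝ)+2) * (r (m+1))^2 :=
      le_of_mul_le_mul_left step2 (by positivity)
    have hK : (0:ℝ) < (m:ℝ)+1 := by positivity
    have ecast : ((m+1 : ℕ) : ℝ) = (m:ℝ)+1 := by push_cast; ring
    rw [ecast, show (1 + 1/((m:ℝ)+1)) = ((m:ℝ)+2)/((m:ℝ)+1) by field_simp; ring]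
    rw [div_mul_eq_mul_div, le_div_iff₀ hK]
    linarith [step3]
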